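/- arXiv:2005.11000 — 2 statements merged into one kernel-verified Lean document; each statement's English description precedes it below -/
import Mathlib

section
/- Let X be a Banach space, Y₁ a normed linear space, and Y₂ a Banach space. Let S : X → Y₂ be a bounded surjective linear map and F : X → Y₁ a bounded linear map such that the restriction of F to X₀ := ker(S) is a bounded linear bijection from X₀ onto Y₁ with bounded inverse. Then the combined map x ↦ (F x, S x) is a bounded linear bijection from X onto Y₁ × Y₂ with bounded inverse. -/
/-- If `S : X → Y₂` is a bounded surjective linear map between Banach spaces,
`F : X → Y₁` is bounded linear into a normed space, and the restriction of `F` to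
`X₀ = ker S` is a bounded linear bijection onto `Y₁` with bounded inverse, then
`x ↦ (F x, S x)` is a bounded linear bijection from `X` onto `Y₁ × Y₂` with bounded inverse. -/
theorem combined_map_isomorphism
    {X Y₁ Y₂ : Type*}
    [NormedAddCommGroup X] [NormedSpace ℝ X] [CompleteSpace X]
    [NormedAddCommGroup Y₁] [NormedSpace ℝ Y₁]
    [NormedAddCommGroup Y₂] [NormedSpace ℝ Y₂] [CompleteSpace Y₂]
    (S : X →L[ℝ] Y₂) (F : X →L[ℝ] Y₁)
    (hS : Function.Surjective S)
    (hFbij : Function.Bijective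
      (fun x : LinearMap.ker (S : X →ₗ[ℝ] Y₂) => F (x : X)))
    (hFinv : ∃ C > 0, ∀ x : LinearMap.ker (S : X →ₗ[ℝ] Y₂), ‖(x : X)‖ ≤ C * ‖F (x : X)‖) :
    Function.Bijective (F.prod S) ∧ ∃ C > 0, ∀ x : X, ‖x‖ ≤ C * ‖(F.prod S) x‖ := by
  obtain ⟨C, hC, hCx⟩ := hFinv
  obtain ⟨C', hC', hC'x⟩ := S.exists_preimage_norm_le hS
  refine ⟨⟨?_, ?_⟩, ?_⟩
  · intro a b hab
    have h1 : F a = F b := congrArg Prod.fst hab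
    have h2 : S a = S b := congrArg Prod.snd hab
    have hm : a - b ∈ LinearMap.ker (S : X →ₗ[ℝ] Y₂) := by
      simp [LinearMap.mem_ker, h2]
    have heq : (⟨a - b, hm⟩ : LinearMap.ker (S : X →ₗ[ℝ] Y₂)) = 0 := by
      apply hFbij.1
      simp [h1]
    have : a - b = 0 := congrArg Subtype.val heq
    exact sub_eq_zero.mp this
  · rintro ⟨y₁, y₂⟩
    obtain ⟨x₂, hx₂⟩ := hS y₂
    obtain ⟨x₀, hx₀⟩ := hFbij.2 (y₁ - F x₂)
    refine ⟨(x₀ : X) + x₂, ?_⟩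
    have hx₀S : S (x₀ : X) = 0 := x₀.2
    simp only at hx₀
    have : F (x₀ : X) + F x₂ = y₁ := by
      rw [hx₀]; abel
    simp [ContinuousLinearMap.prod_apply, this, map_add, hx₀S, hx₂, Prod.ext_iff]
  · refine ⟨C + C * ‖F‖ * C' + C' + 1, by positivity, fun x => ?_⟩
    obtain ⟨u, hu, hun⟩ := hC'x (S x)
    have hm : x - u ∈ LinearMap.ker (S : X →ₗ[ℝ] Y₂) := by
      simp [LinearMap.mem_ker, hu]
    have h1 : ‖x - u‖ ≤ C * ‖F (x - u)‖ := hCx ⟨x - u, hm⟩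
    have h2 : ‖F (x - u)‖ ≤ ‖F x‖ + ‖F‖ * ‖u‖ := by
      rw [map_sub]
      refine (norm_sub_le _ _).trans ?_
      gcongr
      exact F.le_opNorm u
    have h3 : ‖F x‖ ≤ ‖(F.prod S) x‖ := norm_fst_le ((F.prod S) x)
    have h4 : ‖S x‖ ≤ ‖(F.prod S) x‖ := norm_snd_le ((F.prod S) x)
    have h5 : ‖x‖ ≤ ‖x - u‖ + ‖u‖ := by
      simpa using norm_add_le (x - u) u
    have hF0 : (0:ℝ) ≤ ‖F‖ := norm_nonneg _
    have h6 : ‖S x‖ ≥ 0 := norm_nonneg _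
    have h7 : ‖(F.prod S) x‖ ≥ 0 := norm_nonneg _
    nlinarith [mul_le_mul_of_nonneg_left h2 hC.le,
      mul_le_mul_of_nonneg_left hun (by positivity : (0:ℝ) ≤ C * ‖F‖),
      mul_le_mul_of_nonneg_left h3 hC.le,
      mul_le_mul_of_nonneg_left h4 (by positivity : (0:ℝ) ≤ C * ‖F‖ * C' + C'),
      mul_le_mul_of_nonneg_left h4 hC'.le]
end

section
/- Let I = (0,T) and Ω ⊂ ℝ^d with Ω bounded Lipschitz. For u₁ in L₂(I;H¹(Ω)) ∩ H^{1/2}(I;L₂(Ω)) and v₃ ∈ L₂(I;H¹(Ω)) ∩ H^{1/2}_{00}(I;L₂(Ω)) (where H^{1/2}_{00}(I) := [L₂(I), H¹₀(I)]_{1/2} is the interpolation space), the pairing ∫_{I×Ω} ∂_t u₁ · v₃ dx dt extends continuously from smooth functions and satisfies |∫_{I×Ω} ∂_t u₁ v₃ dx dt| ≲ ‖u₁‖_{H^{1/2}(I;L₂(Ω))} ‖v₃‖_{H^{1/2}_{00}(I;L₂(Ω))}. -/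
open MeasureTheory RealInnerProductSpace

set_option linter.unusedSectionVars false
set_option maxHeartbeats 1000000


noncomputable section

variable {V₀ : Type*} [NormedAddCommGroup V₀] [InnerProductSpace ℝ V₀] [CompleteSpace V₀]

/-- The K-functional `K(t,u; V₀, V₁)` for the couple `(V₀, V₁)`, where the subspace
`V₁ ⊆ V₀` carries the graph norm `(‖w‖² + ‖D w‖²)^{1/2}` of the operator `D`
(here: the time derivative, so that `V₁` plays the role of `H¹(I;L₂(Ω))`). -/
def Kfun (V₁ : Submodule ℝ V₀) (D : V₁ →ₗ[ℝ] V₀) (t : ℝ) (u : V₀) : ℝ :=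
  sInf {r : ℝ | ∃ w : V₁, r = ‖u - (w : V₀)‖ +
    t * Real.sqrt (‖(w : V₀)‖ ^ 2 + ‖D w‖ ^ 2)}

/-- The interpolation norm of exponent `1/2` obtained by the real (K-)method:
`‖u‖_{[V₀,V₁]_{1/2}} = (∫₀^∞ (t^{-1/2} K(t,u))² dt/t)^{1/2}`. -/
def halfNorm (V₁ : Submodule ℝ V₀) (D : V₁ →ₗ[ℝ] V₀) (u : V₀) : ℝ :=
  Real.sqrt (∫ t in Set.Ioi (0 : ℝ), (Kfun V₁ D t u) ^ 2 / t ^ 2)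

namespace InterpAux


variable (V₁ : Submodule ℝ V₀) (D : V₁ →ₗ[ℝ] V₀)

/-- graph norm -/
def g (w : V₁) : ℝ := Real.sqrt (‖(w : V₀)‖ ^ 2 + ‖D w‖ ^ 2)

lemma g_nonneg (w : V₁) : 0 ≤ g V₁ D w := Real.sqrt_nonneg _

lemma norm_le_g (w : V₁) : ‖(w : V₀)‖ ≤ g V₁ D w :=
  (Real.le_sqrt (norm_nonneg _) (by positivity)).2 (by nlinarith [sq_nonneg ‖D w‖])

lemma normD_le_g (w : V₁) : ‖D w‖ ≤ g V₁ D w :=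
  (Real.le_sqrt (norm_nonneg _) (by positivity)).2 (by nlinarith [sq_nonneg ‖(w : V₀)‖])

lemma Kset_def (t : ℝ) (u : V₀) :
    Kfun V₁ D t u = sInf {r : ℝ | ∃ w : V₁, r = ‖u - (w : V₀)‖ + t * g V₁ D w} := rfl

lemma Kset_nonempty (t : ℝ) (u : V₀) :
    {r : ℝ | ∃ w : V₁, r = ‖u - (w : V₀)‖ + t * g V₁ D w}.Nonempty :=
  ⟨_, ⟨0, rfl⟩⟩

lemma Kset_bdd {t : ℝ} (ht : 0 ≤ t) (u : V₀) :
    BddBelow {r : ℝ | ∃ w : V₁, r = ‖u - (w : V₀)‖ + t * g V₁ D w} := by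
  refine ⟨0, fun r hr => ?_⟩
  obtain ⟨w, rfl⟩ := hr
  have := g_nonneg V₁ D w
  positivity

lemma K_nonneg {t : ℝ} (ht : 0 ≤ t) (u : V₀) : 0 ≤ Kfun V₁ D t u := by
  rw [Kset_def]
  refine le_csInf (Kset_nonempty V₁ D t u) (fun r hr => ?_)
  obtain ⟨w, rfl⟩ := hr
  have := g_nonneg V₁ D w
  positivity

lemma K_le {t : ℝ} (ht : 0 ≤ t) (u : V₀) (w : V₁) :
    Kfun V₁ D t u ≤ ‖u - (w : V₀)‖ + t * g V₁ D w := by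
  rw [Kset_def]
  exact csInf_le (Kset_bdd V₁ D ht u) ⟨w, rfl⟩

lemma K_le_norm {t : ℝ} (ht : 0 ≤ t) (u : V₀) : Kfun V₁ D t u ≤ ‖u‖ := by
  have h := K_le V₁ D ht u 0
  simpa [g] using h

lemma K_le_t_mul {t : ℝ} (ht : 0 ≤ t) (u : V₁) :
    Kfun V₁ D t (u : V₀) ≤ t * g V₁ D u := by
  have h := K_le V₁ D ht (u : V₀) u
  simpa using h

lemma K_mono {t t' : ℝ} (ht : 0 ≤ t) (htt' : t ≤ t') (u : V₀) :
    Kfun V₁ D t u ≤ Kfun V₁ D t' u := by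
  rw [Kset_def, Kset_def]
  refine le_csInf (Kset_nonempty V₁ D t' u) (fun r hr => ?_)
  obtain ⟨w, rfl⟩ := hr
  refine le_trans (csInf_le (Kset_bdd V₁ D ht u) ⟨w, rfl⟩) ?_
  have := g_nonneg V₁ D w
  nlinarith

lemma min_norm_le_K {t : ℝ} (ht : 0 < t) (u : V₀) :
    min 1 t * ‖u‖ ≤ Kfun V₁ D t u := by
  rw [Kset_def]
  refine le_csInf (Kset_nonempty V₁ D t u) (fun r hr => ?_)
  obtain ⟨w, rfl⟩ := hr
  have h1 : ‖u‖ ≤ ‖u - (w : V₀)‖ + ‖(w : V₀)‖ := by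
    have := norm_sub_norm_le u (w : V₀)
    linarith [norm_sub_rev u (w:V₀) ▸ (norm_le_insert' u (w:V₀))]
  have h2 : ‖(w : V₀)‖ ≤ g V₁ D w := norm_le_g V₁ D w
  rcases le_total (1:ℝ) t with h | h
  · simp only [min_eq_left h]
    nlinarith [norm_nonneg (u - (w:V₀)), norm_nonneg ((w:V₀)), g_nonneg V₁ D w]
  · simp only [min_eq_right h]
    nlinarith [norm_nonneg (u - (w:V₀)), norm_nonneg ((w:V₀)), g_nonneg V₁ D w]

lemma K_pos {t : ℝ} (ht : 0 < t) {u : V₀} (hu : u ≠ 0) : 0 < Kfun V₁ D t u := by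
  refine lt_of_lt_of_le ?_ (min_norm_le_K V₁ D ht u)
  have : 0 < ‖u‖ := norm_pos_iff.2 hu
  have : (0:ℝ) < min 1 t := lt_min one_pos ht
  positivity

lemma exists_near {t : ℝ} (ht : 0 < t) {u : V₀} (hu : u ≠ 0) :
    ∃ w : V₁, ‖u - (w : V₀)‖ + t * g V₁ D w ≤ 2 * Kfun V₁ D t u := by
  have hK := K_pos V₁ D ht hu
  have h : Kfun V₁ D t u < 2 * Kfun V₁ D t u := by linarith
  rw [Kset_def] at h
  obtain ⟨r, hr, hlt⟩ := (csInf_lt_iff (Kset_bdd V₁ D ht.le u) (Kset_nonempty V₁ D t u)).1 h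
  obtain ⟨w, rfl⟩ := hr
  exact ⟨w, hlt.le⟩


lemma aesm_f (u : V₀) :
    AEStronglyMeasurable (fun t : ℝ => (Kfun V₁ D t u) ^ 2 / t ^ 2)
      (volume.restrict (Set.Ioi (0:ℝ))) := by
  have hmono : Monotone (fun t : ℝ => Kfun V₁ D (max t 0) u) := by
    intro s t hst
    exact K_mono V₁ D (le_max_right s 0) (max_le_max hst le_rfl) u
  have hm : Measurable (fun t : ℝ => (Kfun V₁ D (max t 0) u) ^ 2 / t ^ 2) :=
    ((hmono.measurable).pow_const 2).div (measurable_id.pow_const 2)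
  refine (hm.aestronglyMeasurable).congr ?_
  filter_upwards [ae_restrict_mem measurableSet_Ioi] with t ht
  simp only [Set.mem_Ioi] at ht
  rw [max_eq_left ht.le]

lemma integrableOn_f (u : V₁) :
    IntegrableOn (fun t : ℝ => (Kfun V₁ D t (u : V₀)) ^ 2 / t ^ 2) (Set.Ioi (0:ℝ)) := by
  set h : ℝ → ℝ := fun t => if t ≤ 1 then (g V₁ D u) ^ 2 else ‖(u : V₀)‖ ^ 2 / t ^ 2 with hh
  have hint : IntegrableOn h (Set.Ioi (0:ℝ)) := by
    rw [← Set.Ioc_union_Ioi_eq_Ioi (zero_le_one (α := ℝ))]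
    refine IntegrableOn.union ?_ ?_
    · have : IntegrableOn (fun _ : ℝ => (g V₁ D u) ^ 2) (Set.Ioc (0:ℝ) 1) :=
        integrableOn_const measure_Ioc_lt_top.ne
      refine this.congr_fun ?_ measurableSet_Ioc
      intro t ht
      simp [hh, ht.2]
    · have hb : IntegrableOn (fun t : ℝ => ‖(u : V₀)‖ ^ 2 * t ^ (-2:ℝ)) (Set.Ioi (1:ℝ)) :=
        (integrableOn_Ioi_rpow_of_lt (by norm_num) one_pos).const_mul _
      refine hb.congr_fun ?_ measurableSet_Ioi
      intro t ht
      simp only [Set.mem_Ioi] at ht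
      have ht0 : (0:ℝ) < t := lt_trans one_pos ht
      rw [hh]
      simp only [not_le.2 ht, if_false]
      rw [Real.rpow_neg ht0.le, show ((2:ℝ)) = ((2:ℕ):ℝ) by norm_num, Real.rpow_natCast]
      ring
  refine Integrable.mono' hint (aesm_f V₁ D (u : V₀)) ?_
  filter_upwards [ae_restrict_mem measurableSet_Ioi] with t ht
  simp only [Set.mem_Ioi] at ht
  have hK0 : 0 ≤ Kfun V₁ D t (u : V₀) := K_nonneg V₁ D ht.le _
  have habs : ‖(Kfun V₁ D t (u : V₀)) ^ 2 / t ^ 2‖ = (Kfun V₁ D t (u : V₀)) ^ 2 / t ^ 2 := by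
    rw [Real.norm_eq_abs, abs_of_nonneg (by positivity)]
  rw [habs, hh]
  by_cases h1 : t ≤ 1
  · simp only [h1, if_true]
    have := K_le_t_mul V₁ D ht.le u
    calc (Kfun V₁ D t (u : V₀)) ^ 2 / t ^ 2 ≤ (t * g V₁ D u) ^ 2 / t ^ 2 := by
          apply div_le_div_of_nonneg_right ?_ (by positivity)
          · exact pow_le_pow_left₀ hK0 this 2
      _ = (g V₁ D u) ^ 2 := by field_simp
  · simp only [h1, if_false]
    have := K_le_norm V₁ D ht.le (u : V₀)
    apply div_le_div_of_nonneg_right ?_ (by positivity)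
    exact pow_le_pow_left₀ hK0 this 2

/-- dyadic lower bound for the halfNorm integral -/
lemma sum_dyadic_le (u : V₁) (s : Finset ℤ) :
    ∑ k ∈ s, ((2:ℝ) ^ k)⁻¹ * (Kfun V₁ D ((2:ℝ) ^ k) (u : V₀)) ^ 2
      ≤ 4 * (halfNorm V₁ D (u : V₀)) ^ 2 := by
  set f : ℝ → ℝ := fun t => (Kfun V₁ D t (u : V₀)) ^ 2 / t ^ 2 with hf
  have hfnonneg : ∀ t ∈ Set.Ioi (0:ℝ), 0 ≤ f t := by
    intro t ht
    simp only [Set.mem_Ioi] at ht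
    have := K_nonneg V₁ D ht.le (u : V₀)
    positivity
  have hint : IntegrableOn f (Set.Ioi (0:ℝ)) := integrableOn_f V₁ D u
  have hsq : (halfNorm V₁ D (u : V₀)) ^ 2 = ∫ t in Set.Ioi (0:ℝ), f t := by
    rw [halfNorm, Real.sq_sqrt]
    exact setIntegral_nonneg measurableSet_Ioi hfnonneg
  rw [hsq]
  -- each dyadic interval
  have key : ∀ k : ℤ, ((2:ℝ) ^ k)⁻¹ * (Kfun V₁ D ((2:ℝ) ^ k) (u : V₀)) ^ 2
      ≤ 4 * ∫ t in Set.Ioc ((2:ℝ)^k) ((2:ℝ)^(k+1)), f t := by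
    intro k
    have h2k : (0:ℝ) < (2:ℝ)^k := zpow_pos (by norm_num) k
    have h2k1 : (0:ℝ) < (2:ℝ)^(k+1) := zpow_pos (by norm_num) (k+1)
    have hkk1 : (2:ℝ)^k ≤ (2:ℝ)^(k+1) := by
      apply zpow_le_zpow_right₀ (by norm_num) (by omega)
    have hKk := K_nonneg V₁ D h2k.le (u : V₀)
    have hconst : ∀ t ∈ Set.Ioc ((2:ℝ)^k) ((2:ℝ)^(k+1)),
        (Kfun V₁ D ((2:ℝ)^k) (u : V₀))^2 / ((2:ℝ)^(k+1))^2 ≤ f t := by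
      intro t ht
      obtain ⟨ht1, ht2⟩ := ht
      have ht0 : (0:ℝ) < t := lt_trans h2k ht1
      have hKmono := K_mono V₁ D h2k.le ht1.le (u : V₀)
      calc (Kfun V₁ D ((2:ℝ)^k) (u : V₀))^2 / ((2:ℝ)^(k+1))^2
          ≤ (Kfun V₁ D ((2:ℝ)^k) (u : V₀))^2 / t^2 := by
            apply div_le_div_of_nonneg_left (by positivity) (by positivity)
            exact pow_le_pow_left₀ ht0.le ht2 2
        _ ≤ f t := div_le_div_of_nonneg_right (pow_le_pow_left₀ hKk hKmono 2) (by positivity)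
    have hgeq := setIntegral_ge_of_const_le (μ := volume) measurableSet_Ioc
      (measure_Ioc_lt_top.ne) hconst (hint.mono_set (by
        intro t ht
        exact Set.mem_Ioi.2 (lt_of_lt_of_le h2k ht.1.le)))
    have hvol : (volume (Set.Ioc ((2:ℝ)^k) ((2:ℝ)^(k+1)))).toReal = (2:ℝ)^k := by
      rw [Real.volume_Ioc, ENNReal.toReal_ofReal (by linarith)]
      have : (2:ℝ)^(k+1) = 2 * (2:ℝ)^k := by
        rw [zpow_add₀ (two_ne_zero), zpow_one]; ring
      rw [this]; ring
    rw [measureReal_def, hvol, smul_eq_mul, mul_comm ((2:ℝ)^k)] at hgeq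
    have h4 : ((2:ℝ) ^ k)⁻¹ * (Kfun V₁ D ((2:ℝ) ^ k) (u : V₀)) ^ 2
        = 4 * ((Kfun V₁ D ((2:ℝ)^k) (u : V₀))^2 / ((2:ℝ)^(k+1))^2 * (2:ℝ)^k) := by
      have : ((2:ℝ)^(k+1))^2 = 4 * ((2:ℝ)^k)^2 := by
        rw [zpow_add₀ (two_ne_zero), zpow_one]; ring
      field_simp [this]
      rw [zpow_add₀ two_ne_zero, zpow_one]
      ring
    rw [h4]
    have := mul_le_mul_of_nonneg_left hgeq (by norm_num : (0:ℝ) ≤ 4)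
    exact this
  calc ∑ k ∈ s, ((2:ℝ) ^ k)⁻¹ * (Kfun V₁ D ((2:ℝ) ^ k) (u : V₀)) ^ 2
      ≤ ∑ k ∈ s, 4 * ∫ t in Set.Ioc ((2:ℝ)^k) ((2:ℝ)^(k+1)), f t :=
        Finset.sum_le_sum (fun k _ => key k)
    _ = 4 * ∑ k ∈ s, ∫ t in Set.Ioc ((2:ℝ)^k) ((2:ℝ)^(k+1)), f t := by
        rw [Finset.mul_sum]
    _ ≤ 4 * ∫ t in Set.Ioi (0:ℝ), f t := by
        gcongr 4 * ?_
        have hdisj : (↑s : Set ℤ).Pairwise (Function.onFun Disjoint fun k : ℤ => Set.Ioc ((2:ℝ)^k) ((2:ℝ)^(k+1))) := by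
          intro k _ l _ hkl
          refine Set.Ioc_disjoint_Ioc.2 ?_
          rcases lt_or_gt_of_ne hkl with h | h
          · refine le_trans (min_le_left _ _) (le_trans ?_ (le_max_right _ _))
            exact zpow_le_zpow_right₀ (by norm_num) (by omega)
          · refine le_trans (min_le_right _ _) (le_trans ?_ (le_max_left _ _))
            exact zpow_le_zpow_right₀ (by norm_num) (by omega)
        rw [← integral_biUnion_finset s (fun k _ => measurableSet_Ioc) hdisj
          (fun k _ => hint.mono_set (by
            intro t ht
            exact Set.mem_Ioi.2 (lt_of_lt_of_le (zpow_pos (by norm_num) k) ht.1.le)))]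
        apply setIntegral_mono_set hint
        · filter_upwards [ae_restrict_mem measurableSet_Ioi] with t ht
          exact hfnonneg t ht
        · refine HasSubset.Subset.eventuallyLE ?_
          intro t ht
          simp only [Set.mem_iUnion] at ht
          obtain ⟨k, _, hk⟩ := ht
          exact Set.mem_Ioi.2 (lt_of_lt_of_le (zpow_pos (by norm_num) k) hk.1.le)


end InterpAux

open InterpAux

/-- interpolation bound for the time-derivative pairing.
Let `V₀ = L₂(I;L₂(Ω))`, let `V₁ = H¹(I;L₂(Ω))` with time derivative `D`, and let
`W₁ = H¹₀(I;L₂(Ω))` with time derivative `D₀`, related by integration by parts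
`⟪D u, v⟫ = −⟪u, D₀ v⟫` (no boundary terms, as `v` vanishes at both endpoints).
Then the pairing `(u,v) ↦ ∫_{I×Ω} ∂ₜu · v = ⟪D u, v⟫`, which is bounded
`V₁ × V₀ → ℝ` and (by parts) `V₀ × W₁ → ℝ`, satisfies
`|∫_{I×Ω} ∂ₜu₁ v₃| ≲ ‖u₁‖_{H^{1/2}(I;L₂(Ω))} ‖v₃‖_{H^{1/2}_{00}(I;L₂(Ω))}`,
with the `1/2`-interpolation norms `[V₀,V₁]_{1/2}` and `[V₀,W₁]_{1/2}` realized by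
the K-method; in particular the pairing extends continuously to these spaces. -/
theorem time_derivative_pairing_interpolation_bound
    (V₁ W₁ : Submodule ℝ V₀)
    (D : V₁ →ₗ[ℝ] V₀) (D₀ : W₁ →ₗ[ℝ] V₀)
    (hparts : ∀ (u : V₁) (v : W₁), ⟪D u, (v : V₀)⟫ = -⟪(u : V₀), D₀ v⟫) :
    ∃ C > 0, ∀ (u : V₁) (v : W₁),
      |⟪D u, (v : V₀)⟫| ≤ C * halfNorm V₁ D (u : V₀) * halfNorm W₁ D₀ (v : V₀) := by
  have hsqrt2 : (0:ℝ) < Real.sqrt 2 := Real.sqrt_pos.2 (by norm_num)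
  refine ⟨56 * Real.sqrt 2, by positivity, ?_⟩
  intro u v
  have hNnn : 0 ≤ halfNorm V₁ D (u : V₀) := Real.sqrt_nonneg _
  have hMnn : 0 ≤ halfNorm W₁ D₀ (v : V₀) := Real.sqrt_nonneg _
  have hRHSnn : 0 ≤ 56 * Real.sqrt 2 * halfNorm V₁ D (u : V₀) * halfNorm W₁ D₀ (v : V₀) :=
    mul_nonneg (mul_nonneg (by positivity) hNnn) hMnn
  by_cases hu : (u : V₀) = 0
  · have hu0 : u = 0 := Submodule.coe_eq_zero.1 hu
    have h0 : ⟪D u, (v : V₀)⟫ = 0 := by rw [hu0, map_zero, inner_zero_left]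
    rw [h0, abs_zero]
    exact hRHSnn
  by_cases hv : (v : V₀) = 0
  · have h0 : ⟪D u, (v : V₀)⟫ = 0 := by rw [hv, inner_zero_right]
    rw [h0, abs_zero]
    exact hRHSnn
  -- near-optimal decompositions at dyadic scales
  choose w hw using fun k : ℤ => exists_near V₁ D (zpow_pos two_pos k) hu
  choose b hb using fun k : ℤ => exists_near W₁ D₀ (zpow_pos two_pos k) hv
  set Ku : ℤ → ℝ := fun k => Kfun V₁ D ((2:ℝ)^k) (u:V₀) with hKudef
  set Kv : ℤ → ℝ := fun k => Kfun W₁ D₀ ((2:ℝ)^k) (v:V₀) with hKvdef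
  have hKu_nn : ∀ k, 0 ≤ Ku k := fun k => K_nonneg V₁ D (zpow_pos two_pos k).le _
  have hKv_nn : ∀ k, 0 ≤ Kv k := fun k => K_nonneg W₁ D₀ (zpow_pos two_pos k).le _
  have hKu_mono : ∀ k, Ku k ≤ Ku (k+1) := fun k =>
    K_mono V₁ D (zpow_pos two_pos k).le (zpow_le_zpow_right₀ one_le_two (by omega)) _
  have h2kpos : ∀ k : ℤ, (0:ℝ) < (2:ℝ)^k := fun k => zpow_pos two_pos k
  -- distance and graph-norm bounds from near-optimality
  have hdistu : ∀ k, ‖(u:V₀) - (w k : V₀)‖ ≤ 2 * Ku k := by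
    intro k
    have h1 := hw k
    have h2 : 0 ≤ (2:ℝ)^k * g V₁ D (w k) := mul_nonneg (h2kpos k).le (g_nonneg V₁ D _)
    linarith
  have hdistv : ∀ k, ‖(v:V₀) - (b k : V₀)‖ ≤ 2 * Kv k := by
    intro k
    have h1 := hb k
    have h2 : 0 ≤ (2:ℝ)^k * g W₁ D₀ (b k) := mul_nonneg (h2kpos k).le (g_nonneg W₁ D₀ _)
    linarith
  have hgu : ∀ k, g V₁ D (w k) ≤ ((2:ℝ)^k)⁻¹ * (2 * Ku k) := by
    intro k
    have h1 : (2:ℝ)^k * g V₁ D (w k) ≤ 2 * Ku k := by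
      have := hw k; linarith [norm_nonneg ((u:V₀) - (w k : V₀))]
    have h2 := mul_le_mul_of_nonneg_left h1 (inv_nonneg.2 (h2kpos k).le)
    rwa [← mul_assoc, inv_mul_cancel₀ (h2kpos k).ne', one_mul] at h2
  have hgv : ∀ k, g W₁ D₀ (b k) ≤ ((2:ℝ)^k)⁻¹ * (2 * Kv k) := by
    intro k
    have h1 : (2:ℝ)^k * g W₁ D₀ (b k) ≤ 2 * Kv k := by
      have := hb k; linarith [norm_nonneg ((v:V₀) - (b k : V₀))]
    have h2 := mul_le_mul_of_nonneg_left h1 (inv_nonneg.2 (h2kpos k).le)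
    rwa [← mul_assoc, inv_mul_cancel₀ (h2kpos k).ne', one_mul] at h2
  -- per-term bound
  have hterm : ∀ k : ℤ, |⟪D (w k - w (k+1)), (v:V₀)⟫|
      ≤ 14 * (((2:ℝ)^k)⁻¹ * (Ku (k+1) * Kv k)) := by
    intro k
    set T : ℝ := ((2:ℝ)^k)⁻¹ with hT
    have hTpos : 0 < T := inv_pos.2 (h2kpos k)
    set δ : V₁ := w k - w (k+1) with hδ
    have hid : ⟪D δ, (v:V₀)⟫ = ⟪D δ, (v:V₀) - (b k : V₀)⟫ + -⟪(δ:V₀), D₀ (b k)⟫ := by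
      rw [← hparts δ (b k), ← inner_add_right, sub_add_cancel]
    have habs : |⟪D δ, (v:V₀)⟫| ≤ ‖D δ‖ * ‖(v:V₀) - (b k : V₀)‖ + ‖(δ:V₀)‖ * ‖D₀ (b k)‖ := by
      rw [hid]
      refine le_trans (abs_add_le _ _) ?_
      rw [abs_neg]
      exact add_le_add (abs_real_inner_le_norm _ _) (abs_real_inner_le_norm _ _)
    -- bound on ‖D δ‖
    have hT1 : ((2:ℝ)^(k+1))⁻¹ * 2 = T := by
      rw [hT, zpow_add₀ (two_ne_zero) k 1, zpow_one, mul_inv]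
      field_simp
    have hDδ : ‖D δ‖ ≤ 3 * (T * Ku (k+1)) := by
      have h1 : ‖D δ‖ ≤ ‖D (w k)‖ + ‖D (w (k+1))‖ := by
        rw [hδ, map_sub]; exact norm_sub_le _ _
      have h2 : ‖D (w k)‖ ≤ T * (2 * Ku k) := le_trans (normD_le_g V₁ D _) (hgu k)
      have h3 : ‖D (w (k+1))‖ ≤ T * Ku (k+1) := by
        refine le_trans (normD_le_g V₁ D _) (le_trans (hgu (k+1)) ?_)
        rw [show ((2:ℝ)^(k+1))⁻¹ * (2 * Ku (k+1)) = (((2:ℝ)^(k+1))⁻¹ * 2) * Ku (k+1) by ring,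
          hT1]
      have h4 : T * Ku k ≤ T * Ku (k+1) := mul_le_mul_of_nonneg_left (hKu_mono k) hTpos.le
      linarith
    have hδn : ‖(δ:V₀)‖ ≤ 4 * Ku (k+1) := by
      have hco : (δ:V₀) = ((u:V₀) - (w (k+1) : V₀)) - ((u:V₀) - (w k : V₀)) := by
        rw [hδ]; push_cast; abel
      calc ‖(δ:V₀)‖ ≤ ‖(u:V₀) - (w (k+1) : V₀)‖ + ‖(u:V₀) - (w k : V₀)‖ := by
            rw [hco]; exact norm_sub_le _ _
        _ ≤ 2 * Ku (k+1) + 2 * Ku k := add_le_add (hdistu (k+1)) (hdistu k)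
        _ ≤ 4 * Ku (k+1) := by linarith [hKu_mono k]
    have hDb : ‖D₀ (b k)‖ ≤ T * (2 * Kv k) := le_trans (normD_le_g W₁ D₀ _) (hgv k)
    calc |⟪D δ, (v:V₀)⟫| ≤ ‖D δ‖ * ‖(v:V₀) - (b k : V₀)‖ + ‖(δ:V₀)‖ * ‖D₀ (b k)‖ := habs
      _ ≤ (3 * (T * Ku (k+1))) * (2 * Kv k) + (4 * Ku (k+1)) * (T * (2 * Kv k)) := by
          refine add_le_add (mul_le_mul hDδ (hdistv k) (norm_nonneg _) ?_)
            (mul_le_mul hδn hDb (norm_nonneg _) ?_)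
          · exact mul_nonneg (by norm_num) (mul_nonneg hTpos.le (hKu_nn _))
          · exact mul_nonneg (by norm_num) (hKu_nn _)
      _ = 14 * (T * (Ku (k+1) * Kv k)) := by ring
  -- quantities for the limit argument
  set N : ℝ := halfNorm V₁ D (u:V₀)
  set M : ℝ := halfNorm W₁ D₀ (v:V₀)
  set E : ℝ := 2 * g V₁ D u * ‖D₀ v‖ + 2 * ‖(u:V₀)‖ * ‖(v:V₀)‖ with hE
  have hEnn : 0 ≤ E := by
    have := g_nonneg V₁ D u
    positivity
  -- the bound for every m
  have hbound : ∀ m : ℕ, |⟪D u, (v:V₀)⟫| ≤ 56 * Real.sqrt 2 * N * M + (1/2:ℝ)^m * E := by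
    intro m
    -- telescoping
    set F : ℕ → ℝ := fun i => ⟪D (w (-(m:ℤ) + i)), (v:V₀)⟫ with hF
    have hsplit : ⟪D u, (v:V₀)⟫
        = ⟪D (u - w (-(m:ℤ))), (v:V₀)⟫ + (F 0 - F (2*m)) + F (2*m) := by
      have hDu : D u = D (u - w (-(m:ℤ))) + D (w (-(m:ℤ))) := by
        rw [← map_add]; congr 1; abel
      have hF0 : F 0 = ⟪D (w (-(m:ℤ))), (v:V₀)⟫ := by
        rw [hF]; norm_num
      rw [hDu, inner_add_left, hF0]
      ring
    -- term A
    have hA : |⟪D (u - w (-(m:ℤ))), (v:V₀)⟫| ≤ (1/2:ℝ)^m * (2 * g V₁ D u * ‖D₀ v‖) := by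
      rw [hparts (u - w (-(m:ℤ))) v, abs_neg]
      have h1 : ‖((u - w (-(m:ℤ)) : V₁) : V₀)‖ ≤ 2 * Ku (-(m:ℤ)) := by
        have : ((u - w (-(m:ℤ)) : V₁) : V₀) = (u:V₀) - (w (-(m:ℤ)) : V₀) := by push_cast; ring
        rw [this]; exact hdistu _
      have h2 : Ku (-(m:ℤ)) ≤ (2:ℝ)^(-(m:ℤ)) * g V₁ D u :=
        K_le_t_mul V₁ D (h2kpos _).le u
      have h3 : ((2:ℝ)^(-(m:ℤ))) = (1/2:ℝ)^m := by
        rw [zpow_neg, zpow_natCast]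
        simp [one_div, inv_pow]
      calc |⟪((u - w (-(m:ℤ)) : V₁) : V₀), D₀ v⟫|
          ≤ ‖((u - w (-(m:ℤ)) : V₁) : V₀)‖ * ‖D₀ v‖ := abs_real_inner_le_norm _ _
        _ ≤ (2 * ((2:ℝ)^(-(m:ℤ)) * g V₁ D u)) * ‖D₀ v‖ := by
            refine mul_le_mul_of_nonneg_right ?_ (norm_nonneg _)
            refine le_trans h1 ?_
            linarith [h2]
        _ = (1/2:ℝ)^m * (2 * g V₁ D u * ‖D₀ v‖) := by rw [h3]; ring
    -- term C
    have hC : |F (2*m)| ≤ (1/2:ℝ)^m * (2 * ‖(u:V₀)‖ * ‖(v:V₀)‖) := by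
      have hcast : -(m:ℤ) + ((2*m : ℕ) : ℤ) = (m:ℤ) := by push_cast; ring
      rw [hF]
      simp only []
      rw [hcast]
      have h1 : ‖D (w (m:ℤ))‖ ≤ ((2:ℝ)^(m:ℤ))⁻¹ * (2 * Ku (m:ℤ)) :=
        le_trans (normD_le_g V₁ D _) (hgu _)
      have h2 : Ku (m:ℤ) ≤ ‖(u:V₀)‖ := K_le_norm V₁ D (h2kpos _).le _
      have h3 : ((2:ℝ)^((m:ℤ)))⁻¹ = (1/2:ℝ)^m := by
        rw [zpow_natCast]
        simp [one_div, inv_pow]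
      calc |⟪D (w (m:ℤ)), (v:V₀)⟫| ≤ ‖D (w (m:ℤ))‖ * ‖(v:V₀)‖ := abs_real_inner_le_norm _ _
        _ ≤ (((2:ℝ)^(m:ℤ))⁻¹ * (2 * Ku (m:ℤ))) * ‖(v:V₀)‖ := by
            exact mul_le_mul_of_nonneg_right h1 (norm_nonneg _)
        _ ≤ (((2:ℝ)^(m:ℤ))⁻¹ * (2 * ‖(u:V₀)‖)) * ‖(v:V₀)‖ := by
            have hp : (0:ℝ) ≤ ((2:ℝ)^((m:ℤ)))⁻¹ := (inv_pos.2 (h2kpos _)).le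
            refine mul_le_mul_of_nonneg_right ?_ (norm_nonneg _)
            refine mul_le_mul_of_nonneg_left ?_ hp
            linarith
        _ = (1/2:ℝ)^m * (2 * ‖(u:V₀)‖ * ‖(v:V₀)‖) := by rw [h3]; ring
    -- term B : the sum
    have hBsum : |F 0 - F (2*m)| ≤ 56 * Real.sqrt 2 * N * M := by
      have hFdiff : ∀ i : ℕ, F i - F (i+1) = ⟪D (w (-(m:ℤ)+i) - w ((-(m:ℤ)+i)+1)), (v:V₀)⟫ := by
        intro i
        rw [hF]
        have hcast : -(m:ℤ) + ((i+1 : ℕ) : ℤ) = (-(m:ℤ)+i) + 1 := by push_cast; ring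
        simp only []
        rw [hcast, map_sub, inner_sub_left]
      have h0 : F 0 - F (2*m) = ∑ i ∈ Finset.range (2*m),
          ⟪D (w (-(m:ℤ)+i) - w ((-(m:ℤ)+i)+1)), (v:V₀)⟫ := by
        have : F 0 - F (2*m) = ∑ i ∈ Finset.range (2*m), (F i - F (i+1)) :=
          (Finset.sum_range_sub' F (2*m)).symm
        rw [this]
        exact Finset.sum_congr rfl (fun i _ => hFdiff i)
      rw [h0]
      -- Cauchy–Schwarz
      set P : ℕ → ℝ := fun i => Real.sqrt (((2:ℝ)^((-(m:ℤ)+i)+1))⁻¹) * Ku ((-(m:ℤ)+i)+1) with hP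
      set Q : ℕ → ℝ := fun i => Real.sqrt (((2:ℝ)^(-(m:ℤ)+i))⁻¹) * Kv (-(m:ℤ)+i) with hQ
      have hPnn : ∀ i, 0 ≤ P i := fun i => mul_nonneg (Real.sqrt_nonneg _) (hKu_nn _)
      have hQnn : ∀ i, 0 ≤ Q i := fun i => mul_nonneg (Real.sqrt_nonneg _) (hKv_nn _)
      have hPQ : ∀ i : ℕ, 14 * ((((2:ℝ)^(-(m:ℤ)+i))⁻¹) * (Ku ((-(m:ℤ)+i)+1) * Kv (-(m:ℤ)+i)))
          = 14 * Real.sqrt 2 * (P i * Q i) := by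
        intro i
        set k : ℤ := -(m:ℤ)+i
        have h2k := h2kpos k
        have hsq : Real.sqrt (((2:ℝ)^(k+1))⁻¹) * Real.sqrt (((2:ℝ)^k)⁻¹)
            = ((2:ℝ)^k)⁻¹ * (Real.sqrt 2)⁻¹ := by
          rw [← Real.sqrt_mul (by positivity) _]
          rw [show ((2:ℝ)^(k+1))⁻¹ * ((2:ℝ)^k)⁻¹ = (((2:ℝ)^k)⁻¹)^2 * 2⁻¹ by
            rw [zpow_add₀ two_ne_zero k 1, zpow_one]; field_simp]
          rw [Real.sqrt_mul (by positivity), Real.sqrt_sq (by positivity), Real.sqrt_inv]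
        rw [hP, hQ]
        simp only []
        rw [show Real.sqrt (((2:ℝ)^(k+1))⁻¹) * Ku (k+1) * (Real.sqrt (((2:ℝ)^k)⁻¹) * Kv k)
            = (Real.sqrt (((2:ℝ)^(k+1))⁻¹) * Real.sqrt (((2:ℝ)^k)⁻¹)) * (Ku (k+1) * Kv k) by ring,
          hsq]
        have : Real.sqrt 2 * (Real.sqrt 2)⁻¹ = 1 := mul_inv_cancel₀ hsqrt2.ne'
        field_simp
      have hCS : ∑ i ∈ Finset.range (2*m), P i * Q i
          ≤ Real.sqrt (∑ i ∈ Finset.range (2*m), P i ^ 2)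
            * Real.sqrt (∑ i ∈ Finset.range (2*m), Q i ^ 2) := by
        have h1 := Finset.sum_mul_sq_le_sq_mul_sq (Finset.range (2*m)) P Q
        have h2 : 0 ≤ ∑ i ∈ Finset.range (2*m), P i * Q i :=
          Finset.sum_nonneg (fun i _ => mul_nonneg (hPnn i) (hQnn i))
        rw [← Real.sqrt_mul (Finset.sum_nonneg (fun i _ => sq_nonneg (P i)))]
        rw [show ∑ i ∈ Finset.range (2*m), P i * Q i
            = Real.sqrt ((∑ i ∈ Finset.range (2*m), P i * Q i)^2) by
          rw [Real.sqrt_sq h2]]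
        exact Real.sqrt_le_sqrt h1
      have hPsum : ∑ i ∈ Finset.range (2*m), P i ^ 2 ≤ 4 * N ^ 2 := by
        have hinj : Set.InjOn (fun i : ℕ => (-(m:ℤ)+i)+1) (Finset.range (2*m)) := by
          intro a _ b _ hab
          simp only at hab
          omega
        have himg := Finset.sum_image (f := fun k : ℤ => ((2:ℝ)^k)⁻¹ * (Ku k)^2) hinj
        have heq : ∑ i ∈ Finset.range (2*m), P i ^ 2
            = ∑ k ∈ (Finset.range (2*m)).image (fun i : ℕ => (-(m:ℤ)+i)+1),
                ((2:ℝ)^k)⁻¹ * (Ku k)^2 := by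
          rw [himg]
          refine Finset.sum_congr rfl (fun i _ => ?_)
          rw [hP]
          simp only []
          rw [mul_pow, Real.sq_sqrt (by positivity)]
        rw [heq]
        exact sum_dyadic_le V₁ D u _
      have hQsum : ∑ i ∈ Finset.range (2*m), Q i ^ 2 ≤ 4 * M ^ 2 := by
        have hinj : Set.InjOn (fun i : ℕ => -(m:ℤ)+i) (Finset.range (2*m)) := by
          intro a _ b _ hab
          simp only at hab
          omega
        have himg := Finset.sum_image (f := fun k : ℤ => ((2:ℝ)^k)⁻¹ * (Kv k)^2) hinj
        have heq : ∑ i ∈ Finset.range (2*m), Q i ^ 2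
            = ∑ k ∈ (Finset.range (2*m)).image (fun i : ℕ => -(m:ℤ)+i),
                ((2:ℝ)^k)⁻¹ * (Kv k)^2 := by
          rw [himg]
          refine Finset.sum_congr rfl (fun i _ => ?_)
          rw [hQ]
          simp only []
          rw [mul_pow, Real.sq_sqrt (by positivity)]
        rw [heq]
        exact sum_dyadic_le W₁ D₀ v _
      calc |∑ i ∈ Finset.range (2*m), ⟪D (w (-(m:ℤ)+i) - w ((-(m:ℤ)+i)+1)), (v:V₀)⟫|
          ≤ ∑ i ∈ Finset.range (2*m), |⟪D (w (-(m:ℤ)+i) - w ((-(m:ℤ)+i)+1)), (v:V₀)⟫| :=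
            Finset.abs_sum_le_sum_abs _ _
        _ ≤ ∑ i ∈ Finset.range (2*m),
              14 * Real.sqrt 2 * (P i * Q i) := by
            refine Finset.sum_le_sum (fun i _ => ?_)
            rw [← hPQ i]
            exact hterm (-(m:ℤ)+i)
        _ = 14 * Real.sqrt 2 * ∑ i ∈ Finset.range (2*m), P i * Q i := by
            rw [Finset.mul_sum]
        _ ≤ 14 * Real.sqrt 2 * (Real.sqrt (∑ i ∈ Finset.range (2*m), P i ^ 2)
              * Real.sqrt (∑ i ∈ Finset.range (2*m), Q i ^ 2)) := by
            refine mul_le_mul_of_nonneg_left hCS (by positivity)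
        _ ≤ 14 * Real.sqrt 2 * ((2*N) * (2*M)) := by
            refine mul_le_mul_of_nonneg_left ?_ (by positivity)
            have hPle : Real.sqrt (∑ i ∈ Finset.range (2*m), P i ^ 2) ≤ 2*N := by
              refine le_trans (Real.sqrt_le_sqrt hPsum) ?_
              rw [show (4:ℝ) * N^2 = (2*N)^2 by ring, Real.sqrt_sq (by linarith)]
            have hQle : Real.sqrt (∑ i ∈ Finset.range (2*m), Q i ^ 2) ≤ 2*M := by
              refine le_trans (Real.sqrt_le_sqrt hQsum) ?_
              rw [show (4:ℝ) * M^2 = (2*M)^2 by ring, Real.sqrt_sq (by linarith)]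
            exact mul_le_mul hPle hQle (Real.sqrt_nonneg _) (by linarith)
        _ = 56 * Real.sqrt 2 * N * M := by ring
    -- combine
    calc |⟪D u, (v:V₀)⟫|
        ≤ |⟪D (u - w (-(m:ℤ))), (v:V₀)⟫| + |F 0 - F (2*m)| + |F (2*m)| := by
          rw [hsplit]
          exact le_trans (abs_add_le _ _) (add_le_add_left (abs_add_le _ _) _)
      _ ≤ (1/2:ℝ)^m * (2 * g V₁ D u * ‖D₀ v‖) + 56 * Real.sqrt 2 * N * M
            + (1/2:ℝ)^m * (2 * ‖(u:V₀)‖ * ‖(v:V₀)‖) :=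
          add_le_add (add_le_add hA hBsum) hC
      _ = 56 * Real.sqrt 2 * N * M + (1/2:ℝ)^m * E := by rw [hE]; ring
  -- take the limit m → ∞
  have hlim : Filter.Tendsto (fun m : ℕ => 56 * Real.sqrt 2 * N * M + (1/2:ℝ)^m * E)
      Filter.atTop (nhds (56 * Real.sqrt 2 * N * M + 0 * E)) := by
    refine Filter.Tendsto.const_add _ (Filter.Tendsto.mul_const E ?_)
    exact tendsto_pow_atTop_nhds_zero_of_lt_one (by norm_num) (by norm_num)
  rw [zero_mul, add_zero] at hlim
  have := ge_of_tendsto' hlim hbound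
  calc |⟪D u, (v:V₀)⟫| ≤ 56 * Real.sqrt 2 * N * M := this
    _ = 56 * Real.sqrt 2 * N * M := rfl

end
end
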